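/- Let n ≥ 7 and let ℓ ∈ ℝⁿ be an ordered, generic, 5-regular length vector with ℓ_{n−1} < ℓ_n. Then the length vector ℓ^{n−1}_− = (ℓ_1,…,ℓ_{n−2}, ℓ_n − ℓ_{n−1}) ∈ ℝ^{n−1} is generic and 3-regular. -/
import Mathlib


noncomputable section

/-- `ℝ^d` with the Euclidean norm. -/
abbrev Euc (d : ℕ) := EuclideanSpace ℝ (Fin d)

/-- A subset `J` is `ℓ`-short if the sum of its entries is less than the sum over the complement. -/
def Short {n : ℕ} (ℓ : Fin n → ℝ) (J : Finset (Fin n)) : Prop :=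
  ∑ j ∈ J, ℓ j < ∑ j ∈ Jᶜ, ℓ j

/-- A subset is `ℓ`-long if its complement is `ℓ`-short. -/
def Long {n : ℕ} (ℓ : Fin n → ℝ) (J : Finset (Fin n)) : Prop := Short ℓ Jᶜ

/-- `ℓ` is generic if every subset is `ℓ`-short or `ℓ`-long. -/
def Generic {n : ℕ} (ℓ : Fin n → ℝ) : Prop := ∀ J : Finset (Fin n), Short ℓ J ∨ Long ℓ J

/-- `ℓ` is `d`-regular if the intersection of all `ℓ`-long subsets of cardinality `d-1`
is nonempty (with the convention that the empty intersection is everything). -/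
def DRegular (d : ℕ) {n : ℕ} (ℓ : Fin n → ℝ) : Prop :=
  ∃ i : Fin n, ∀ J : Finset (Fin n), J.card = d - 1 → Long ℓ J → i ∈ J

private lemma sum_compl_eq {n : ℕ} (ℓ : Fin n → ℝ) (J : Finset (Fin n)) :
    ∑ j ∈ Jᶜ, ℓ j = ∑ j, ℓ j - ∑ j ∈ J, ℓ j := by
  rw [eq_sub_iff_add_eq, Finset.sum_compl_add_sum]

private lemma short_iff {n : ℕ} (ℓ : Fin n → ℝ) (J : Finset (Fin n)) :
    Short ℓ J ↔ 2 * ∑ j ∈ J, ℓ j < ∑ j, ℓ j := by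
  rw [Short, sum_compl_eq]; constructor <;> intro <;> linarith

private lemma long_iff {n : ℕ} (ℓ : Fin n → ℝ) (J : Finset (Fin n)) :
    Long ℓ J ↔ ∑ j, ℓ j < 2 * ∑ j ∈ J, ℓ j := by
  rw [Long, short_iff, sum_compl_eq]
  constructor <;> intro <;> linarith

private lemma long_mono {n : ℕ} {ℓ : Fin n → ℝ} (hpos : ∀ i, 0 < ℓ i)
    {J K : Finset (Fin n)} (hJK : J ⊆ K) (h : Long ℓ J) : Long ℓ K := by
  rw [long_iff] at h ⊢
  have := Finset.sum_le_sum_of_subset_of_nonneg hJK (fun i _ _ => (hpos i).le)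
  linarith

private lemma mem_of_long {n : ℕ} (hn : 5 ≤ n) {ℓ : Fin n → ℝ} (hpos : ∀ i, 0 < ℓ i)
    {i : Fin n} (hi : ∀ J : Finset (Fin n), J.card = 4 → Long ℓ J → i ∈ J)
    {J : Finset (Fin n)} (hc : J.card ≤ 4) (hl : Long ℓ J) : i ∈ J := by
  by_contra hiJ
  have hJsub : J ⊆ Finset.univ.erase i := fun x hx =>
    Finset.mem_erase.2 ⟨fun e => hiJ (e ▸ hx), Finset.mem_univ x⟩
  obtain ⟨K, hJK, hKsub, hK4⟩ := Finset.exists_subsuperset_card_eq hJsub hc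
    (by rw [Finset.card_erase_of_mem (Finset.mem_univ i), Finset.card_univ,
      Fintype.card_fin]; omega)
  exact (Finset.mem_erase.1 (hKsub (hi K hK4 (long_mono hpos hJK hl)))).1 rfl

private lemma aux17 (k : ℕ) (hk : 5 ≤ k) (ℓ : Fin (k + 2) → ℝ) (ℓ' : Fin (k + 1) → ℝ)
    (a b : Fin (k + 2)) (lst : Fin (k + 1))
    (ha : (a : ℕ) = k) (hb : (b : ℕ) = k + 1) (hlstv : (lst : ℕ) = k)
    (hpos : ∀ i, 0 < ℓ i) (hgen : Generic ℓ) (hreg : DRegular 5 ℓ)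
    (hlt : ℓ a < ℓ b)
    (hl'lst : ℓ' lst = ℓ b - ℓ a)
    (hl' : ∀ j : Fin (k + 1), (j : ℕ) ≠ k → ℓ' j = ℓ (Fin.castSucc j)) :
    Generic ℓ' ∧ DRegular 3 ℓ' := by
  classical
  set emb : Fin (k + 1) ↪ Fin (k + 2) := ⟨Fin.castSucc, Fin.castSucc_injective _⟩ with hemb
  have hembv : ∀ j : Fin (k + 1), ((emb j : Fin (k + 2)) : ℕ) = (j : ℕ) := fun j => rfl
  set φ : Finset (Fin (k + 1)) → Finset (Fin (k + 2)) :=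
    fun S => ((S.erase lst).map emb) ∪ {if lst ∈ S then b else a} with hφ
  -- elements of the mapped part have small values
  have hmap_lt : ∀ (S : Finset (Fin (k + 1))) (x : Fin (k + 2)),
      x ∈ (S.erase lst).map emb → (x : ℕ) < k := by
    intro S x hx
    obtain ⟨j, hj, rfl⟩ := Finset.mem_map.1 hx
    have h1 : (j : ℕ) ≠ k := fun h => (Finset.mem_erase.1 hj).1 (Fin.ext (h.trans hlstv.symm))
    have := j.isLt
    rw [hembv]; omega
  have htnot : ∀ (S : Finset (Fin (k + 1))),
      (if lst ∈ S then b else a) ∉ (S.erase lst).map emb := by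
    intro S h
    have := hmap_lt S _ h
    split at this <;> omega
  -- sum over the mapped part
  have hmap_sum : ∀ S : Finset (Fin (k + 1)),
      ∑ x ∈ (S.erase lst).map emb, ℓ x = ∑ j ∈ S.erase lst, ℓ' j := by
    intro S
    rw [Finset.sum_map]
    refine Finset.sum_congr rfl (fun j hj => ?_)
    have h1 : (j : ℕ) ≠ k := fun h => (Finset.mem_erase.1 hj).1 (Fin.ext (h.trans hlstv.symm))
    rw [hl' j h1]; rfl
  -- key sum identity
  have hsum : ∀ S : Finset (Fin (k + 1)), ∑ x ∈ φ S, ℓ x = ∑ j ∈ S, ℓ' j + ℓ a := by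
    intro S
    rw [hφ]
    rw [Finset.sum_union (Finset.disjoint_singleton_right.2 (htnot S)), Finset.sum_singleton,
      hmap_sum]
    by_cases h : lst ∈ S
    · rw [if_pos h, Finset.sum_erase_eq_sub h, hl'lst]; ring
    · rw [if_neg h, Finset.erase_eq_of_notMem h]
  -- cardinality bound
  have hcard : ∀ S : Finset (Fin (k + 1)), (φ S).card ≤ S.card + 1 := by
    intro S
    calc (φ S).card ≤ ((S.erase lst).map emb).card + ({if lst ∈ S then b else a} :
          Finset (Fin (k + 2))).card := Finset.card_union_le _ _
    _ = (S.erase lst).card + 1 := by rw [Finset.card_map, Finset.card_singleton]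
    _ ≤ S.card + 1 := by have := Finset.card_erase_le (s := S) (a := lst); omega
  -- total sum identity
  have hlast2 : (Fin.last (k + 1)) = b := Fin.ext (by rw [hb]; rfl)
  have hcsl : (Fin.castSucc (Fin.last k)) = a := Fin.ext (by rw [ha]; rfl)
  have hlstl : (Fin.last k) = lst := Fin.ext (by rw [hlstv]; rfl)
  have htot : ∑ j, ℓ j = ∑ j, ℓ' j + 2 * ℓ a := by
    rw [Fin.sum_univ_castSucc (f := ℓ), Fin.sum_univ_castSucc (f := fun j => ℓ (Fin.castSucc j)),
      Fin.sum_univ_castSucc (f := ℓ'), hlast2, hcsl, hlstl, hl'lst]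
    have : ∀ j : Fin k, ℓ' (Fin.castSucc j) = ℓ (Fin.castSucc (Fin.castSucc j)) := by
      intro j
      exact hl' _ (by rw [Fin.coe_castSucc]; omega)
    rw [Finset.sum_congr rfl (fun j _ => this j)]
    ring
  -- short/long equivalences
  have hshort : ∀ S, Short ℓ' S ↔ Short ℓ (φ S) := by
    intro S
    rw [short_iff, short_iff, hsum S, htot]
    constructor <;> intro <;> linarith
  have hlong : ∀ S, Long ℓ' S ↔ Long ℓ (φ S) := by
    intro S
    rw [long_iff, long_iff, hsum S, htot]
    constructor <;> intro <;> linarith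
  constructor
  · intro S
    rcases hgen (φ S) with h | h
    · exact Or.inl ((hshort S).2 h)
    · exact Or.inr ((hlong S).2 h)
  · obtain ⟨i, hi⟩ := hreg
    have hi4 : ∀ J : Finset (Fin (k + 2)), J.card ≤ 4 → Long ℓ J → i ∈ J :=
      fun J hc hl => mem_of_long (by omega) hpos (fun J hc hl => hi J (by omega) hl) hc hl
    by_cases hik : (i : ℕ) < k
    · refine ⟨⟨(i : ℕ), by omega⟩, fun S hS hlongS => ?_⟩
      have hl : Long ℓ (φ S) := (hlong S).1 hlongS
      have hc : (φ S).card ≤ 4 := le_trans (hcard S) (by omega)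
      have hmem := hi4 _ hc hl
      rw [hφ] at hmem
      rcases Finset.mem_union.1 hmem with h | h
      · obtain ⟨j, hj, hje⟩ := Finset.mem_map.1 h
        have hjv : (j : ℕ) = (i : ℕ) := by rw [← hembv j, hje]
        have : j = (⟨(i : ℕ), by omega⟩ : Fin (k + 1)) := Fin.ext hjv
        exact this ▸ Finset.mem_of_mem_erase hj
      · exfalso
        have := Finset.mem_singleton.1 h
        have : (i : ℕ) = (if lst ∈ S then b else a : Fin (k + 2)).1 := by rw [this]
        split at this <;> omega
    · refine ⟨lst, fun S hS hlongS => ?_⟩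
      by_contra hlstS
      have hl : Long ℓ (φ S) := (hlong S).1 hlongS
      have hcS : S.card = 2 := by omega
      have hφS : φ S = S.map emb ∪ {a} := by
        rw [hφ]; simp only [Finset.erase_eq_of_notMem hlstS, if_neg hlstS]
      -- the alternative set ψ with b instead of a
      set ψ : Finset (Fin (k + 2)) := S.map emb ∪ {a, b} \ {a} with hψ
      have hψ' : ψ = S.map emb ∪ {b} := by
        rw [hψ]; congr 1
        ext x
        simp only [Finset.mem_sdiff, Finset.mem_insert, Finset.mem_singleton]
        constructor
        · rintro ⟨h1 | h1, h2⟩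
          · exact absurd h1 h2
          · exact h1
        · intro h1
          refine ⟨Or.inr h1, fun h2 => ?_⟩
          rw [h1] at h2; rw [h2] at hb; omega
      have hbnot : b ∉ S.map emb := by
        intro h
        have := hmap_lt S b (by rwa [Finset.erase_eq_of_notMem hlstS])
        omega
      have hanot : a ∉ S.map emb := by
        intro h
        have := hmap_lt S a (by rwa [Finset.erase_eq_of_notMem hlstS])
        omega
      have hsumψ : ∑ x ∈ ψ, ℓ x = ∑ x ∈ φ S, ℓ x + (ℓ b - ℓ a) := by
        rw [hψ', hφS, Finset.sum_union (Finset.disjoint_singleton_right.2 hbnot),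
          Finset.sum_union (Finset.disjoint_singleton_right.2 hanot),
          Finset.sum_singleton, Finset.sum_singleton]
        ring
      have hlψ : Long ℓ ψ := by
        rw [long_iff] at hl ⊢
        rw [hsumψ]
        linarith
      have hcψ : ψ.card ≤ 4 := by
        rw [hψ']
        calc (S.map emb ∪ {b}).card ≤ (S.map emb).card + 1 := Finset.card_union_le _ _
        _ ≤ 4 := by rw [Finset.card_map, hcS]; omega
      have hiφ := hi4 _ (le_trans (hcard S) (by omega)) hl
      have hiψ := hi4 _ hcψ hlψ
      rw [hφS] at hiφ
      rw [hψ'] at hiψ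
      rcases Finset.mem_union.1 hiφ with h | h
      · exact absurd (hmap_lt S i (by rwa [Finset.erase_eq_of_notMem hlstS])) hik
      · have hia : i = a := Finset.mem_singleton.1 h
        rcases Finset.mem_union.1 hiψ with h' | h'
        · exact absurd (hmap_lt S i (by rwa [Finset.erase_eq_of_notMem hlstS])) hik
        · have hib : i = b := Finset.mem_singleton.1 h'
          rw [hia] at hib
          rw [hib] at ha
          omega



/-- Let `n ≥ 7` and let `ℓ ∈ ℝⁿ` be an ordered, generic, `5`-regular
length vector with `ℓ_{n-1} < ℓ_n`. Then the length vector
`ℓ^{n-1}_- = (ℓ_1, …, ℓ_{n-2}, ℓ_n - ℓ_{n-1}) ∈ ℝ^{n-1}` is generic and `3`-regular. -/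
theorem stmt17 (n : ℕ) (hn : 7 ≤ n) (ℓ : Fin n → ℝ)
    (hpos : ∀ i, 0 < ℓ i) (hord : Monotone ℓ) (hgen : Generic ℓ) (hreg : DRegular 5 ℓ)
    (hlt : ℓ ⟨n - 2, by omega⟩ < ℓ ⟨n - 1, by omega⟩) :
    Generic (fun i : Fin (n - 1) =>
      if (i : ℕ) = n - 2 then ℓ ⟨n - 1, by omega⟩ - ℓ ⟨n - 2, by omega⟩
      else ℓ (Fin.castLE (Nat.sub_le n 1) i)) ∧
    DRegular 3 (fun i : Fin (n - 1) =>
      if (i : ℕ) = n - 2 then ℓ ⟨n - 1, by omega⟩ - ℓ ⟨n - 2, by omega⟩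
      else ℓ (Fin.castLE (Nat.sub_le n 1) i)) := by
  obtain ⟨k, rfl⟩ : ∃ k, n = k + 2 := ⟨n - 2, by omega⟩
  exact aux17 k (by omega) ℓ
    (fun i : Fin (k + 1) =>
      if (i : ℕ) = k + 2 - 2 then ℓ ⟨k + 2 - 1, by omega⟩ - ℓ ⟨k + 2 - 2, by omega⟩
      else ℓ (Fin.castLE (Nat.sub_le (k + 2) 1) i))
    ⟨k, by omega⟩ ⟨k + 1, by omega⟩ ⟨k, by omega⟩ rfl rfl rfl hpos hgen hreg hlt
    (by beta_reduce; exact if_pos (show k = k + 2 - 2 by omega))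
    (fun j hj => by beta_reduce; exact if_neg (show ¬(j:ℕ) = k + 2 - 2 by omega))
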